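/- arXiv:1511.03832 — 3 statements merged into one kernel-verified Lean document; each statement's English description precedes it below -/
import Mathlib

section
/- For an almost GCD domain A, the following are equivalent: (a) A is globally perinormal; (b) A is perinormal; (c) A is integrally closed. -/
open scoped nonZeroDivisors

section Defs

variable (A : Type*) [CommRing A] [IsDomain A]

/-- The localization of `A` at the prime `P`, realized as a subset of the `A`-algebra `K`. -/
def locSet (K : Type*) [CommRing K] [Algebra A K] (P : Ideal A) : Set K :=
  {x | ∃ a s : A, s ∉ P ∧ x * algebraMap A K s = algebraMap A K a}

/-- `P` is a valued prime of `A` if `A_P` is a valuation domain. -/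
def ValuedPrime (P : Ideal A) : Prop :=
  ∃ h : P.IsPrime, ValuationRing (Localization.AtPrime P)

/-- `A` is an essential domain if it is the intersection of its localizations at valued primes. -/
def IsEssential : Prop :=
  Set.range (algebraMap A (FractionRing A)) =
    ⋂ P ∈ {P : Ideal A | ValuedPrime A P}, locSet A (FractionRing A) P

/-- An overring `B` of `A` is a lying over overring if `Spec B → Spec A` is surjective. -/
def LyingOverOverring (B : Subalgebra A (FractionRing A)) : Prop :=
  ∀ P : Ideal A, P.IsPrime → ∃ Q : Ideal B, Q.IsPrime ∧ Q.comap (algebraMap A B) = P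

/-- An overring `B` of `A` is a going down overring if going down holds for `A ⊆ B`. -/
def GoingDownOverring (B : Subalgebra A (FractionRing A)) : Prop :=
  ∀ P' P : Ideal A, P'.IsPrime → P.IsPrime → P' ≤ P →
    ∀ Q : Ideal B, Q.IsPrime → Q.comap (algebraMap A B) = P →
      ∃ Q' : Ideal B, Q'.IsPrime ∧ Q' ≤ Q ∧ Q'.comap (algebraMap A B) = P'

/-- `A` is perinormal if every going down overring of `A` is a flat `A`-module. -/
def Perinormal : Prop :=
  ∀ B : Subalgebra A (FractionRing A), GoingDownOverring A B → Module.Flat A B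

/-- `A` is globally perinormal if every going down overring of `A` is a fraction ring of `A`. -/
def GloballyPerinormal : Prop :=
  ∀ B : Subalgebra A (FractionRing A), GoingDownOverring A B →
    ∃ S : Submonoid A, IsLocalization S B

/-- `A` is a P-domain if `A_P` is a valuation domain for each prime `P` minimal over an ideal
of the form `(Aa : b)`. -/
def IsPDomain : Prop :=
  ∀ P : Ideal A,
    (∃ a b : A, P ∈ ((Ideal.span {a} : Ideal A).colon (Ideal.span {b})).minimalPrimes) →
      ValuedPrime A P

/-- `A` is a PVMD if for every finitely generated nonzero ideal `I` there is a finitely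
generated nonzero ideal `J` with `(IJ)_v` principal. -/
def IsPVMD : Prop :=
  ∀ I : Ideal A, I ≠ ⊥ → I.FG → ∃ J : Ideal A, J ≠ ⊥ ∧ J.FG ∧
    ∃ x : FractionRing A,
      1 / (1 / ((I : FractionalIdeal A⁰ (FractionRing A)) * (J : FractionalIdeal A⁰ (FractionRing A)))) =
        FractionalIdeal.spanSingleton A⁰ x

/-- `A` is treed if incomparable primes of `A` are comaximal. -/
def Treed : Prop :=
  ∀ P Q : Ideal A, P.IsPrime → Q.IsPrime → ¬ P ≤ Q → ¬ Q ≤ P → P ⊔ Q = ⊤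

/-- `A` is a Prüfer domain if all its localizations at maximal ideals are valuation domains. -/
def IsPrueferDom : Prop :=
  ∀ M : Ideal A, M.IsMaximal → ValuedPrime A M

/-- The set of height one primes of `A`. -/
def HtOnePrimes : Set (Ideal A) :=
  {P : Ideal A | P.IsPrime ∧ P ≠ ⊥ ∧ ∀ Q : Ideal A, Q.IsPrime → Q < P → Q = ⊥}

/-- `A` is a generalized Krull domain. -/
def IsGenKrull : Prop :=
  (Set.range (algebraMap A (FractionRing A)) =
      ⋂ P ∈ HtOnePrimes A, locSet A (FractionRing A) P) ∧
  (∀ a : A, a ≠ 0 → {P ∈ HtOnePrimes A | a ∈ P}.Finite) ∧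
  (∀ P ∈ HtOnePrimes A, ValuedPrime A P)

/-- `A` is an almost GCD domain. -/
def IsAGCD : Prop :=
  ∀ x y : A, ∃ n : ℕ, 1 ≤ n ∧
    ∃ z : A, Ideal.span {x ^ n} ⊓ Ideal.span {y ^ n} = Ideal.span {z}

/-- `A` has torsion class group (stated for a PVMD): every finitely generated nonzero
fractional ideal has a power whose `v`-closure is principal. -/
def TorsionClassGroup : Prop :=
  ∀ H : FractionalIdeal A⁰ (FractionRing A), H ≠ 0 →
    (H : Submodule A (FractionRing A)).FG →
      ∃ n : ℕ, 1 ≤ n ∧ ∃ x : FractionRing A,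
        1 / (1 / (H ^ n)) = FractionalIdeal.spanSingleton A⁰ x

/-- An overring `B` of `A` is t-linked over `A`. -/
def TLinked (B : Subalgebra A (FractionRing A)) : Prop :=
  ∀ I : Ideal A, I ≠ ⊥ → I.FG →
    ({x : FractionRing A | ∀ y ∈ I, x * algebraMap A (FractionRing A) y ∈
        Set.range (algebraMap A (FractionRing A))} =
      Set.range (algebraMap A (FractionRing A))) →
    ({x : FractionRing A | ∀ y ∈ I, x * algebraMap A (FractionRing A) y ∈ (B : Set (FractionRing A))} =
      (B : Set (FractionRing A)))

end Defs

section Aux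

universe u_aux

variable {A : Type u_aux} [CommRing A] [IsDomain A]

/-- `s` and `t` are "coprime": every common multiple is a multiple of `s*t`. -/
def Cop (s t : A) : Prop := ∀ w : A, s ∣ w → t ∣ w → s * t ∣ w

lemma cop_pow {s t : A} (h : Cop s t) (l : ℕ) : Cop s (t ^ l) := by
  induction l with
  | zero => intro w hs _; simpa using hs
  | succ l ih =>
    intro w hsw htw
    by_cases ht : t = 0
    · have : w = 0 := by
        obtain ⟨y, rfl⟩ := htw
        simp [ht]
      simp [this]
    by_cases hs0 : s = 0
    · have : w = 0 := by
        obtain ⟨x, rfl⟩ := hsw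
        simp [hs0]
      simp [this]
    obtain ⟨y, hy⟩ := htw
    have h1 : s * t ^ l ∣ w := ih w hsw ⟨t * y, by rw [hy]; ring⟩
    obtain ⟨z, hz⟩ := h1
    have hty : t ^ l * (t * y) = t ^ l * (s * z) := by
      calc t ^ l * (t * y) = t ^ (l + 1) * y := by ring
      _ = s * t ^ l * z := by rw [← hy, hz]
      _ = t ^ l * (s * z) := by ring
    have hty' : t * y = s * z := mul_left_cancel₀ (pow_ne_zero l ht) hty
    have h2 : s * t ∣ s * z := h (s * z) ⟨z, rfl⟩ ⟨y, hty'.symm⟩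
    obtain ⟨e, he⟩ := h2
    have hz' : z = t * e := mul_left_cancel₀ hs0 (by rw [he]; ring)
    exact ⟨e, by rw [hz, hz']; ring⟩

lemma decomp (hA : IsAGCD A) {a b : A} (ha : a ≠ 0) (hb : b ≠ 0) :
    ∃ n : ℕ, 1 ≤ n ∧ ∃ s t : A, s ≠ 0 ∧ t ≠ 0 ∧ Cop s t ∧ a ^ n * s = t * b ^ n := by
  obtain ⟨n, hn, z, hz⟩ := hA a b
  have ha' : a ^ n ≠ 0 := pow_ne_zero n ha
  have hb' : b ^ n ≠ 0 := pow_ne_zero n hb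
  have hmem : ∀ w : A, w ∈ Ideal.span {z} ↔ (a ^ n ∣ w ∧ b ^ n ∣ w) := by
    intro w
    rw [← hz]
    simp [Ideal.mem_inf, Ideal.mem_span_singleton]
  have hzz : a ^ n ∣ z ∧ b ^ n ∣ z := (hmem z).mp (Ideal.mem_span_singleton_self z)
  obtain ⟨⟨s, hs⟩, ⟨t, ht⟩⟩ := hzz
  have habz : z ∣ a ^ n * b ^ n := by
    rw [← Ideal.mem_span_singleton, hmem]
    exact ⟨⟨b ^ n, rfl⟩, ⟨a ^ n, mul_comm _ _⟩⟩
  obtain ⟨d, hd⟩ := habz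
  have hd1 : b ^ n = s * d := by
    apply mul_left_cancel₀ ha'
    rw [hd, hs]; ring
  have hd2 : a ^ n = t * d := by
    apply mul_left_cancel₀ hb'
    rw [mul_comm (b ^ n) (a ^ n), hd, ht]; ring
  have hdne : d ≠ 0 := fun h => ha' (by rw [hd2, h, mul_zero])
  have hsne : s ≠ 0 := fun h => hb' (by rw [hd1, h, zero_mul])
  have htne : t ≠ 0 := fun h => ha' (by rw [hd2, h, zero_mul])
  refine ⟨n, hn, s, t, hsne, htne, ?_, by rw [← hs, ht]; ring⟩
  intro w ⟨x, hx⟩ ⟨y, hy⟩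
  have hdw : z ∣ d * w := by
    rw [← Ideal.mem_span_singleton, hmem]
    constructor
    · exact ⟨y, by rw [hy, hd2]; ring⟩
    · exact ⟨x, by rw [hx, hd1]; ring⟩
  obtain ⟨e, he⟩ := hdw
  refine ⟨e, mul_left_cancel₀ hdne ?_⟩
  rw [he, hs, hd2]; ring

lemma minprime_not_cop {s t : A} (hs : s ≠ 0) (ht : t ≠ 0) (hcop : Cop s t)
    {P : Ideal A} (hP : P ∈ (Ideal.span {s} : Ideal A).minimalPrimes) (htP : t ∈ P) :
    False := by
  have hPp : P.IsPrime := hP.1.1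
  have hsP : Ideal.span {s} ≤ P := hP.1.2
  have h1P : (1 : A) ∉ P := fun h => hPp.ne_top (Ideal.eq_top_iff_one P |>.mpr h)
  set T : Submonoid A :=
    { carrier := {w | ∃ l : ℕ, ∃ τ : A, τ ∉ P ∧ w = τ * t ^ l}
      one_mem' := ⟨0, 1, h1P, by simp⟩
      mul_mem' := by
        rintro x y ⟨l, τ, hτ, rfl⟩ ⟨l', τ', hτ', rfl⟩
        exact ⟨l + l', τ * τ', fun h => ((hPp.mem_or_mem h).elim hτ hτ'), by ring⟩ } with hT
  have hdisj : Disjoint ((Ideal.span {s} : Ideal A) : Set A) (T : Set A) := by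
    rw [Set.disjoint_left]
    rintro w hw ⟨l, τ, hτ, rfl⟩
    apply hτ
    obtain ⟨β, hβ⟩ := Ideal.mem_span_singleton.mp hw
    have h1 : s * t ^ l ∣ τ * t ^ l := cop_pow hcop l _ ⟨β, hβ⟩ ⟨τ, mul_comm _ _⟩
    obtain ⟨γ, hγ⟩ := h1
    have : τ = s * γ := by
      apply mul_left_cancel₀ (pow_ne_zero l ht)
      calc t ^ l * τ = τ * t ^ l := mul_comm _ _
      _ = s * t ^ l * γ := hγ
      _ = t ^ l * (s * γ) := by ring
    exact hsP (Ideal.mem_span_singleton.mpr ⟨γ, this⟩)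
  obtain ⟨p, hpp, hsp, hpT⟩ := Ideal.exists_le_prime_disjoint _ T hdisj
  have hpP : p ≤ P := by
    intro x hx
    by_contra hxP
    exact Set.disjoint_left.mp hpT hx ⟨0, x, hxP, by simp⟩
  have hPp' : P ≤ p := hP.2 ⟨hpp, hsp⟩ hpP
  exact Set.disjoint_left.mp hpT (hPp' htP) ⟨1, 1, h1P, by simp⟩

lemma pow_eq_algebraMap_of_isIntegral (hA : IsAGCD A) {x : FractionRing A}
    (hx : IsIntegral A x) :
    ∃ n : ℕ, 1 ≤ n ∧ ∃ w : A, x ^ n = algebraMap A (FractionRing A) w := by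
  set f := algebraMap A (FractionRing A) with hf
  have hinj : Function.Injective f := IsFractionRing.injective A (FractionRing A)
  by_cases hx0 : x = 0
  · exact ⟨1, le_refl 1, 0, by simp [hx0]⟩
  obtain ⟨a, b, hb, hab⟩ := IsFractionRing.div_surjective (A := A) x
  have hbne : b ≠ 0 := nonZeroDivisors.ne_zero hb
  have hane : a ≠ 0 := by
    rintro rfl
    rw [map_zero, zero_div] at hab
    exact hx0 hab.symm
  obtain ⟨n, hn, s, t, hsne, htne, hcop, heq⟩ := decomp hA hane hbne
  have hfbn : f b ≠ 0 := fun h => hbne (hinj (by rw [h, map_zero]))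
  have hfsn : f s ≠ 0 := fun h => hsne (hinj (by rw [h, map_zero]))
  have hy : x ^ n = f t / f s := by
    rw [← hab]
    rw [div_pow, div_eq_div_iff (pow_ne_zero n hfbn) hfsn]
    rw [← map_pow, ← map_pow, ← map_mul, ← map_mul]
    exact congrArg f heq
  have hyint : IsIntegral A (x ^ n) := hx.pow n
  obtain ⟨p, pmonic, hp⟩ := hyint
  have hp' : Polynomial.aeval (f t / f s) p = 0 := by
    rw [Polynomial.aeval_def, ← hy]
    exact hp
  have h2 : Polynomial.aeval (f t) (p.scaleRoots s) = 0 :=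
    Polynomial.scaleRoots_aeval_eq_zero_of_aeval_div_eq_zero hinj hp'
      (mem_nonZeroDivisors_of_ne_zero hsne)
  set q := p.scaleRoots s with hq
  have qmonic : q.Monic := (Polynomial.monic_scaleRoots_iff s).mpr pmonic
  have heval : q.eval t = 0 := by
    apply hinj
    rw [map_zero, ← Polynomial.aeval_algebraMap_apply_eq_algebraMap_eval]
    exact h2
  set m := q.natDegree with hm
  have hm1 : m ≠ 0 := by
    intro h0
    have : q = 1 := qmonic.natDegree_eq_zero.mp h0
    rw [this] at heval
    simp at heval
  have hsdvd : s ∣ t ^ m := by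
    have hsum : q.eval t = ∑ i ∈ Finset.range (m + 1), q.coeff i * t ^ i := by
      rw [hm]; exact Polynomial.eval_eq_sum_range _
    rw [Finset.sum_range_succ] at hsum
    have hcm : q.coeff m = 1 := qmonic.coeff_natDegree
    have ht' : t ^ m = -∑ i ∈ Finset.range m, q.coeff i * t ^ i := by
      have h0 := heval
      rw [hsum, hcm, one_mul] at h0
      exact eq_neg_of_add_eq_zero_right h0
    rw [ht']
    apply dvd_neg.mpr
    apply Finset.dvd_sum
    intro i hi
    have him : i < m := Finset.mem_range.mp hi
    have : s ∣ q.coeff i := by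
      rw [hq, Polynomial.coeff_scaleRoots]
      have : p.natDegree - i ≠ 0 := by
        have : m = p.natDegree := Polynomial.natDegree_scaleRoots p s
        omega
      exact Dvd.dvd.mul_left (dvd_pow_self s this) _
    exact this.mul_right _
  have hst : s * t ^ m ∣ t ^ m := cop_pow hcop m _ hsdvd dvd_rfl
  obtain ⟨γ, hγ⟩ := hst
  have h1 : (1 : A) = s * γ := by
    apply mul_left_cancel₀ (pow_ne_zero m htne)
    rw [mul_one]
    calc t ^ m = s * t ^ m * γ := hγ
    _ = t ^ m * (s * γ) := by ring
  refine ⟨n, hn, t * γ, ?_⟩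
  rw [hy]
  rw [div_eq_iff hfsn, ← map_mul]
  exact congrArg f (by rw [mul_assoc, mul_comm γ s, ← h1, mul_one])

lemma ulift_sum {M : Type*} [AddCommMonoid M] (g : ULift.{v} (Fin 2) → M) :
    ∑ i, g i = g ⟨0⟩ + g ⟨1⟩ := by
  rw [Fintype.sum_equiv Equiv.ulift g (fun i => g ⟨i⟩) (fun i => by cases i; rfl)]
  exact Fin.sum_univ_two _

lemma gd_integralClosure (hA : IsAGCD A) :
    GoingDownOverring A (integralClosure A (FractionRing A)) := by
  intro P' P hP' hP hle Q hQ hQP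
  have hinj : Function.Injective (algebraMap A (FractionRing A)) :=
    IsFractionRing.injective A (FractionRing A)
  haveI := hP'
  obtain ⟨Q', -, hQ'p, hQ'c⟩ :=
    Ideal.exists_ideal_over_prime_of_isIntegral
      (S := ↥(integralClosure A (FractionRing A))) P' ⊥ (by
      intro r hr
      have : algebraMap A ↥(integralClosure A (FractionRing A)) r = 0 :=
        Ideal.mem_comap.mp hr
      have : algebraMap A (FractionRing A) r = 0 := by
        have h2 := congrArg (Subtype.val) this
        simpa using h2
      have : r = 0 := hinj (by rw [this, map_zero])
      rw [this]; exact P'.zero_mem)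
  refine ⟨Q', hQ'p, ?_, hQ'c⟩
  intro x hx
  obtain ⟨n, hn, w, hw⟩ := pow_eq_algebraMap_of_isIntegral hA x.2
  have hxw : algebraMap A ↥(integralClosure A (FractionRing A)) w = x ^ n := by
    apply Subtype.ext
    have h3 : ((x ^ n : ↥(integralClosure A (FractionRing A))) : FractionRing A)
        = ((x : FractionRing A)) ^ n := by push_cast; rfl
    exact hw.symm.trans h3.symm
  have hwP' : w ∈ P' := by
    rw [← hQ'c]
    exact Ideal.mem_comap.mpr (hxw ▸ Ideal.pow_mem_of_mem Q' hx n (by omega))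
  have hwP : w ∈ P := hle hwP'
  have hxnQ : x ^ n ∈ Q := by
    rw [← hxw]
    rw [← hQP] at hwP
    exact Ideal.mem_comap.mp hwP
  exact hQ.mem_of_pow_mem n hxnQ

set_option maxHeartbeats 1000000 in
set_option synthInstance.maxHeartbeats 400000 in
lemma peri_ic (hA : IsAGCD A) (hp : Perinormal A) : IsIntegrallyClosed A := by
  rw [isIntegrallyClosed_iff (FractionRing A)]
  intro x hx
  have hinj : Function.Injective (algebraMap A (FractionRing A)) :=
    IsFractionRing.injective A (FractionRing A)
  haveI hflat : Module.Flat A ↥(integralClosure A (FractionRing A)) :=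
    hp _ (gd_integralClosure hA)
  set z : ↥(integralClosure A (FractionRing A)) := ⟨x, hx⟩ with hzdef
  obtain ⟨a, σ, hσ, hab⟩ := IsFractionRing.div_surjective (A := A) x
  have hσne : σ ≠ 0 := nonZeroDivisors.ne_zero hσ
  have hfσ : algebraMap A (FractionRing A) σ ≠ 0 := fun h => hσne (hinj (by rw [h, map_zero]))
  set f2 : ULift.{u_aux} (Fin 2) → A := fun i => ![a, -σ] i.down with hf2
  set x2 : ULift.{u_aux} (Fin 2) → ↥(integralClosure A (FractionRing A)) :=
    fun i => ![1, z] i.down with hx2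
  have hrel0 : ∑ i, f2 i • x2 i = 0 := by
    rw [ulift_sum]
    apply Subtype.ext
    have : ((f2 ⟨0⟩ • x2 ⟨0⟩ + f2 ⟨1⟩ • x2 ⟨1⟩ :
          ↥(integralClosure A (FractionRing A))) : FractionRing A)
        = a • (1 : FractionRing A) + (-σ) • x := by
      push_cast [hf2, hx2]
      simp [hzdef]
    rw [this]
    simp only [Algebra.smul_def, map_neg, mul_one, ZeroMemClass.coe_zero]
    rw [← hab]
    field_simp
    ring
  obtain ⟨κ, c, y, hxy, hrel⟩ :=
    Module.Flat.isTrivialRelation_of_sum_smul_eq_zero hrel0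
  set I : Ideal A :=
    (LinearMap.range (Algebra.linearMap A (FractionRing A))).colon
      (Submodule.span A {x}) with hI
  have hcI : ∀ j, c ⟨0⟩ j ∈ I := by
    intro j
    have h := hrel j
    rw [ulift_sum] at h
    have hac : a * c ⟨0⟩ j = σ * c ⟨1⟩ j := by
      simp only [hf2, Matrix.cons_val_zero, Matrix.cons_val_one, Matrix.head_cons] at h
      linear_combination h
    rw [hI, Submodule.mem_colon_span_singleton]
    refine ⟨c ⟨1⟩ j, ?_⟩
    show algebraMap A (FractionRing A) (c ⟨1⟩ j) = c ⟨0⟩ j • x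
    rw [Algebra.smul_def, ← hab]
    rw [mul_div_assoc', eq_div_iff hfσ, ← map_mul, ← map_mul]
    exact congrArg _ (by linear_combination (-1 : A) * hac)
  by_contra hxr
  push_neg at hxr
  have h1I : (1 : A) ∉ I := by
    intro h1
    rw [hI, Submodule.mem_colon_span_singleton, one_smul] at h1
    obtain ⟨w, hw⟩ := h1
    exact hxr w hw
  obtain ⟨𝔪, h𝔪max, h𝔪⟩ := Ideal.exists_le_maximal I (fun h => h1I (h ▸ Submodule.mem_top))
  haveI := h𝔪max
  obtain ⟨Qm, hQm, hQmc⟩ :=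
    Ideal.exists_ideal_over_maximal_of_isIntegral
      (S := ↥(integralClosure A (FractionRing A))) 𝔪 (by
      intro r hr
      have : algebraMap A ↥(integralClosure A (FractionRing A)) r = 0 := hr
      have h0 : algebraMap A (FractionRing A) r = 0 := by
        have h2 := congrArg (Subtype.val) this
        simpa using h2
      have : r = 0 := hinj (by rw [h0, map_zero])
      rw [this]; exact 𝔪.zero_mem)
  have h1Qm : (1 : ↥(integralClosure A (FractionRing A))) ∈ Qm := by
    have hone : (1 : ↥(integralClosure A (FractionRing A))) = ∑ j, c ⟨0⟩ j • y j := by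
      have := hxy ⟨0⟩
      simpa [hx2] using this
    rw [hone]
    apply Ideal.sum_mem
    intro j _
    rw [Algebra.smul_def]
    apply Ideal.mul_mem_right
    have : c ⟨0⟩ j ∈ 𝔪 := h𝔪 (hcI j)
    rw [← hQmc] at this
    exact Ideal.mem_comap.mp this
  exact hQm.ne_top (Ideal.eq_top_iff_one Qm |>.mpr h1Qm)

lemma ic_gp (hA : IsAGCD A) (hic : IsIntegrallyClosed A) : GloballyPerinormal A := by
  intro B hgd
  have hinj : Function.Injective (algebraMap A (FractionRing A)) :=
    IsFractionRing.injective A (FractionRing A)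
  refine ⟨{ carrier := {s | IsUnit (algebraMap A ↥B s)}
            one_mem' := by simp
            mul_mem' := fun hx hy => by
              simp only [Set.mem_setOf_eq, map_mul] at *
              exact hx.mul hy }, ?_, ?_, ?_⟩
  · rintro ⟨s, hs⟩
    exact hs
  · intro z
    obtain ⟨a, b, hb, hab⟩ := IsFractionRing.div_surjective (A := A) (z : FractionRing A)
    have hbne : b ≠ 0 := nonZeroDivisors.ne_zero hb
    have hfbn : algebraMap A (FractionRing A) b ≠ 0 := fun h => hbne (hinj (by rw [h, map_zero]))
    by_cases hz0 : (z : FractionRing A) = 0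
    · refine ⟨(0, 1), ?_⟩
      apply Subtype.ext
      push_cast
      rw [hz0]
      simp
    have hane : a ≠ 0 := by
      rintro rfl
      rw [map_zero, zero_div] at hab
      exact hz0 hab.symm
    obtain ⟨n, hn, s, t, hsne, htne, hcop, heq⟩ := decomp hA hane hbne
    have hfsn : algebraMap A (FractionRing A) s ≠ 0 := fun h => hsne (hinj (by rw [h, map_zero]))
    have hKey : algebraMap A (FractionRing A) s * (z : FractionRing A) ^ n = algebraMap A (FractionRing A) t := by
      rw [← hab, div_pow, mul_div_assoc', div_eq_iff (pow_ne_zero n hfbn)]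
      rw [← map_pow, ← map_pow, ← map_mul, ← map_mul]
      exact congrArg (algebraMap A (FractionRing A)) (by linear_combination heq)
    have hsS : IsUnit (algebraMap A ↥B s) := by
      by_contra hsu
      have hspan : Ideal.span {algebraMap A ↥B s} ≠ ⊤ := fun h =>
        hsu (Ideal.span_singleton_eq_top.mp h)
      obtain ⟨Q, hQmax, hQle⟩ := Ideal.exists_le_maximal _ hspan
      set P := Q.comap (algebraMap A ↥B) with hP
      haveI := hQmax.isPrime
      haveI hPprime : P.IsPrime := Ideal.IsPrime.comap _
      have hsP : s ∈ P :=
        Ideal.mem_comap.mpr (hQle (Ideal.subset_span (Set.mem_singleton _)))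
      obtain ⟨P', hP'min, hP'le⟩ :=
        Ideal.exists_minimalPrimes_le ((Ideal.span_singleton_le_iff_mem P).mpr hsP)
      obtain ⟨Q', hQ'p, hQ'le, hQ'c⟩ :=
        hgd P' P hP'min.1.1 hPprime hP'le Q hQmax.isPrime rfl
      have hsP' : s ∈ P' := hP'min.1.2 (Ideal.subset_span (Set.mem_singleton _))
      have hsQ' : algebraMap A ↥B s ∈ Q' := by
        rw [← hQ'c] at hsP'
        exact Ideal.mem_comap.mp hsP'
      have htB : algebraMap A ↥B t = algebraMap A ↥B s * z ^ n := by
        apply Subtype.ext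
        push_cast
        exact hKey.symm
      have htQ' : algebraMap A ↥B t ∈ Q' := by
        rw [htB]
        exact Ideal.mul_mem_right _ _ hsQ'
      have htP' : t ∈ P' := by
        rw [← hQ'c]
        exact Ideal.mem_comap.mpr htQ'
      exact minprime_not_cop hsne htne hcop hP'min htP'
    set ζ : FractionRing A := (z : FractionRing A) * algebraMap A (FractionRing A) s with hζ
    have hζpow : ζ ^ n = algebraMap A (FractionRing A) (t * s ^ (n - 1)) := by
      apply mul_left_cancel₀ hfsn
      rw [hζ, mul_pow, ← map_mul]
      calc algebraMap A (FractionRing A) s * ((z : FractionRing A) ^ n * algebraMap A (FractionRing A) s ^ n)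
          = (algebraMap A (FractionRing A) s * (z : FractionRing A) ^ n) * algebraMap A (FractionRing A) s ^ n := by ring
        _ = algebraMap A (FractionRing A) t * algebraMap A (FractionRing A) s ^ n := by rw [hKey]
        _ = algebraMap A (FractionRing A) (s * (t * s ^ (n - 1))) := by
            rw [← map_pow, ← map_mul]
            exact congrArg (algebraMap A (FractionRing A)) (by
              have : s * (t * s ^ (n - 1)) = t * (s * s ^ (n - 1)) := by ring
              rw [this, ← pow_succ']
              have : n - 1 + 1 = n := by omega
              rw [this])
    have hζint : IsIntegral A ζ := by
      refine ⟨Polynomial.X ^ n - Polynomial.C (t * s ^ (n - 1)),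
        Polynomial.monic_X_pow_sub_C _ (by omega), ?_⟩
      simp [Polynomial.eval₂_sub, hζpow]
    obtain ⟨w, hw⟩ := ((isIntegrallyClosed_iff (FractionRing A)).mp hic) hζint
    refine ⟨(w, ⟨s, hsS⟩), ?_⟩
    apply Subtype.ext
    push_cast
    show (z : FractionRing A) * algebraMap A (FractionRing A) s = algebraMap A (FractionRing A) w
    rw [hw, hζ]
  · intro x y h
    refine ⟨1, ?_⟩
    have : algebraMap A (FractionRing A) x = algebraMap A (FractionRing A) y := by
      have h2 := congrArg (Subtype.val) h
      simpa using h2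
    rw [hinj this]

lemma gp_peri (hgp : GloballyPerinormal A) : Perinormal A := by
  intro B hgd
  obtain ⟨S, hloc⟩ := hgp B hgd
  exact IsLocalization.flat ↥B S

end Aux

/-- for an AGCD domain, globally perinormal ⟺ perinormal ⟺ integrally closed. -/
theorem agcd_perinormal_tfae (A : Type*) [CommRing A] [IsDomain A]
    (hA : IsAGCD A) :
    (GloballyPerinormal A ↔ Perinormal A) ∧ (Perinormal A ↔ IsIntegrallyClosed A) := by
  refine ⟨⟨gp_peri, fun hp => ic_gp hA (peri_ic hA hp)⟩,
    ⟨peri_ic hA, fun hic => gp_peri (ic_gp hA hic)⟩⟩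
end

section
/- Let A ⊆ B be a root extension of integral domains (every x ∈ B has xⁿ ∈ A for some n ≥ 1). If B is an overring of A that is flat as an A-module, then A = B. -/
open scoped nonZeroDivisors

universe u in
/-- Auxiliary: equational criterion for flatness applied to a two-term relation. -/
lemma flat_factor_aux {R M : Type u} [CommRing R] [AddCommGroup M] [Module R M]
    [Module.Flat R M] (s a : R) (xv e : M) (h : s • xv - a • e = 0) :
    ∃ (κ : Type u) (_ : Fintype κ) (c d : κ → R) (y : κ → M),
      xv = ∑ j, c j • y j ∧ e = ∑ j, d j • y j ∧ ∀ j, s * c j = a * d j := by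
  classical
  let f : ULift.{u} (Fin 2) → R := fun i => if i.down = 0 then s else -a
  let v : ULift.{u} (Fin 2) → M := fun i => if i.down = 0 then xv else e
  have hsum : ∀ {N : Type u} [AddCommMonoid N] (g : ULift.{u} (Fin 2) → N),
      ∑ i, g i = g (ULift.up 0) + g (ULift.up 1) := by
    intro N _ g
    rw [Fintype.sum_equiv (Equiv.ulift (α := Fin 2)) g (fun i => g (ULift.up i))
      (fun i => rfl), Fin.sum_univ_two]
  have hrel : ∑ i, f i • v i = 0 := by
    rw [hsum]
    simp only [f, v, ULift.down_up, if_pos rfl, if_neg (by decide : ¬(1 : Fin 2) = 0)]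
    rw [neg_smul, ← sub_eq_add_neg]
    exact h
  obtain ⟨k, cmat0, y0, hy0, hc0⟩ :=
    Module.Flat.isTrivialRelation_of_sum_smul_eq_zero hrel
  let κ : Type u := ULift.{u} (Fin k)
  let cmat : ULift.{u} (Fin 2) → κ → R := fun i j => cmat0 i j.down
  let y : κ → M := fun j => y0 j.down
  have hy : ∀ i, v i = ∑ j, cmat i j • y j := by
    intro i
    rw [hy0 i]
    exact (Fintype.sum_equiv (Equiv.ulift (α := Fin k)) (fun j => cmat i j • y j) _
      (fun _ => rfl)).symm
  have hc : ∀ j, ∑ i, f i * cmat i j = 0 := fun j => hc0 j.down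
  refine ⟨κ, inferInstance, cmat (ULift.up 0), cmat (ULift.up 1), y, ?_, ?_, ?_⟩
  · simpa [v] using hy (ULift.up 0)
  · have := hy (ULift.up 1)
    simpa [v, if_neg (by decide : ¬(1 : Fin 2) = 0)] using this
  · intro j
    have h2 := hc j
    rw [hsum] at h2
    simp only [f, ULift.down_up, if_pos rfl,
      if_neg (by decide : ¬(1 : Fin 2) = 0)] at h2
    linear_combination h2

/-- a flat overring which is a root extension coincides with the base. -/
theorem flat_root_extension_overring_eq
    (A : Type*) [CommRing A] [IsDomain A] (B : Subalgebra A (FractionRing A))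
    (hroot : ∀ x : B, ∃ n : ℕ, 1 ≤ n ∧ x ^ n ∈ (algebraMap A B).range)
    (hflat : Module.Flat A B) : B = ⊥ := by
  classical
  set K := FractionRing A
  have hinjK : Function.Injective (algebraMap A K) := IsFractionRing.injective A K
  have hinj : Function.Injective (algebraMap A B) := by
    intro a b h
    apply hinjK
    have : (algebraMap A B a : K) = (algebraMap A B b : K) := congrArg _ h
    simpa [IsScalarTower.algebraMap_apply A B K] using this
  -- integrality from root condition
  have hint : Algebra.IsIntegral A B := by
    constructor
    intro x
    obtain ⟨n, hn, b, hb⟩ := hroot x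
    have : IsIntegral A (x ^ n) := hb ▸ isIntegral_algebraMap
    exact this.of_pow hn
  -- main argument
  rw [eq_bot_iff]
  intro x hx
  rw [Algebra.mem_bot]
  set xB : B := ⟨x, hx⟩ with hxB
  -- write x = a / s
  obtain ⟨⟨a, s⟩, hs⟩ := IsLocalization.surj (M := A⁰) (S := K) x
  -- the relation s • x - a • 1 = 0 in B
  have hrel : (s : A) • xB - a • (1 : B) = 0 := by
    refine Subtype.ext ?_
    push_cast
    rw [Algebra.smul_def, Algebra.smul_def, mul_one]
    linear_combination hs
  obtain ⟨κ, _, c1, c2, y, hy1, hy2, hc⟩ := flat_factor_aux (s : A) a xB 1 hrel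
  -- the conductor ideal of x
  set I : Ideal A := Submodule.comap (LinearMap.toSpanSingleton A K x)
    (LinearMap.range (Algebra.linearMap A K)) with hI
  have hmemI : ∀ r : A, r ∈ I ↔ ∃ t : A, algebraMap A K t = r • x := by
    intro r
    simp [hI, LinearMap.toSpanSingleton_apply, eq_comm]
  -- columns of the bottom row lie in I
  have hcol : ∀ j, c2 j ∈ I := by
    intro j
    rw [hmemI]
    refine ⟨c1 j, ?_⟩
    have hj := hc j
    have hsne : algebraMap A K s ≠ 0 := by
      simpa using fun h => nonZeroDivisors.coe_ne_zero s (hinjK (h ▸ (map_zero _).symm))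
    apply mul_right_cancel₀ hsne
    have h1 : algebraMap A K ((s : A) * c1 j) = algebraMap A K (a * c2 j) := by
      congr 1
    have h2 : x * algebraMap A K s = algebraMap A K a := hs
    calc algebraMap A K (c1 j) * algebraMap A K s
        = algebraMap A K ((s : A) * c1 j) := by rw [← map_mul, mul_comm]
      _ = algebraMap A K a * algebraMap A K (c2 j) := by rw [h1, map_mul]
      _ = (c2 j) • x * algebraMap A K s := by
          rw [← h2, Algebra.smul_def]; ring
  -- 1 ∈ I • B, via the factorization
  have hone : (1 : B) ∈ Ideal.map (algebraMap A B) I := by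
    rw [hy2]
    refine Ideal.sum_mem _ fun j _ => ?_
    rw [Algebra.smul_def]
    exact Ideal.mul_mem_right _ _ (Ideal.mem_map_of_mem _ (hcol j))
  -- I must be ⊤, else lying over gives a contradiction
  have hItop : I = ⊤ := by
    by_contra hne
    obtain ⟨M, hM, hIM⟩ := Ideal.exists_le_maximal I hne
    haveI := hM.isPrime
    obtain ⟨Q, hQ, hQM⟩ :=
      Ideal.exists_ideal_over_prime_of_isIntegral_of_isDomain (S := B) M
        (by rw [(RingHom.injective_iff_ker_eq_bot _).mp hinj]; exact bot_le)
    have hmap : Ideal.map (algebraMap A B) I ≤ Q := by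
      rw [Ideal.map_le_iff_le_comap, hQM]
      exact hIM
    exact hQ.ne_top (Ideal.eq_top_iff_one Q |>.mpr (hmap hone))
  have h1I : (1 : A) ∈ I := hItop ▸ Submodule.mem_top
  obtain ⟨t, ht⟩ := (hmemI 1).mp h1I
  exact ⟨t, by simpa using ht⟩
end

section
/- Let A be a PVMD such that for every finitely generated nonzero ideal I of A there exist n ≥ 1 and b ∈ A with Iⁿ ⊆ bA ⊆ I_v. Then A is globally perinormal. -/
open scoped nonZeroDivisors

set_option linter.unusedSectionVars false
set_option maxHeartbeats 1600000
set_option synthInstance.maxHeartbeats 400000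



section Vmach
variable {A : Type*} [CommRing A] [IsDomain A]

local notation "K" => FractionRing A
local notation "φ" => algebraMap A K

/-- v-closure -/
noncomputable def vv (X : FractionalIdeal A⁰ K) : FractionalIdeal A⁰ K := 1 / (1 / X)

lemma one_div_ne_zero_aux {X : FractionalIdeal A⁰ K} (hX : X ≠ 0) : 1 / X ≠ 0 := by
  obtain ⟨d, hd, hint⟩ := X.isFractional
  have hd0 : d ≠ 0 := mem_nonZeroDivisors_iff_ne_zero.mp hd
  have hmem : φ d ∈ 1 / X := by
    rw [FractionalIdeal.mem_div_iff_of_ne_zero hX]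
    intro y hy
    obtain ⟨c, hc⟩ := hint y hy
    exact (FractionalIdeal.mem_one_iff _).mpr ⟨c, by rw [hc, Algebra.smul_def]⟩
  intro h
  rw [h] at hmem
  have : φ d = 0 := by simpa using hmem
  exact hd0 (IsFractionRing.to_map_eq_zero_iff.mp this)

lemma vv_zero : vv (0 : FractionalIdeal A⁰ K) = 0 := by
  show (1 : FractionalIdeal A⁰ K) / (1 / 0) = 0
  rw [FractionalIdeal.div_zero, FractionalIdeal.div_zero]

lemma le_vv (X : FractionalIdeal A⁰ K) : X ≤ vv X := by
  by_cases hX : X = 0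
  · rw [hX, vv_zero]
  · exact (FractionalIdeal.le_div_iff_mul_le (one_div_ne_zero_aux hX)).mpr
      FractionalIdeal.mul_one_div_le_one

lemma one_div_anti {X Y : FractionalIdeal A⁰ K} (hX : X ≠ 0) (h : X ≤ Y) : 1 / Y ≤ 1 / X := by
  have hY : Y ≠ 0 := fun hY => hX (le_antisymm (hY ▸ h) (FractionalIdeal.zero_le X))
  intro z hz
  exact (FractionalIdeal.mem_div_iff_of_ne_zero hX).mpr fun y hy =>
    (FractionalIdeal.mem_div_iff_of_ne_zero hY).mp hz y (h hy)

lemma vv_mono {X Y : FractionalIdeal A⁰ K} (h : X ≤ Y) : vv X ≤ vv Y := by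
  by_cases hX : X = 0
  · rw [hX, vv_zero]; exact FractionalIdeal.zero_le _
  have hY : Y ≠ 0 := fun hY => hX (le_antisymm (hY ▸ h) (FractionalIdeal.zero_le X))
  exact one_div_anti (one_div_ne_zero_aux hY) (one_div_anti hX h)

lemma vv_one : vv (1 : FractionalIdeal A⁰ K) = 1 := by
  show (1 : FractionalIdeal A⁰ K) / (1 / 1) = 1
  rw [FractionalIdeal.div_one, FractionalIdeal.div_one]

end Vmach



section Vmach2
variable {A : Type*} [CommRing A] [IsDomain A]

local notation "K" => FractionRing A
local notation "φ" => algebraMap A K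


lemma exists_mem_ne_zero {X : FractionalIdeal A⁰ K} (hX : X ≠ 0) :
    ∃ x ∈ X, x ≠ (0 : K) := by
  by_contra h
  push_neg at h
  exact hX (FractionalIdeal.eq_zero_iff.mpr h)

lemma mul_ne_zero'' {X Y : FractionalIdeal A⁰ K} (hX : X ≠ 0) (hY : Y ≠ 0) : X * Y ≠ 0 := by
  obtain ⟨x, hx, hx0⟩ := exists_mem_ne_zero hX
  obtain ⟨y, hy, hy0⟩ := exists_mem_ne_zero hY
  intro h
  have : x * y ∈ X * Y := FractionalIdeal.mul_mem_mul hx hy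
  rw [h] at this
  exact mul_ne_zero hx0 hy0 (by simpa using this)

lemma pow_ne_zero'' {X : FractionalIdeal A⁰ K} (hX : X ≠ 0) (m : ℕ) : X ^ m ≠ 0 := by
  induction m with
  | zero => simpa using one_ne_zero
  | succ k ih => rw [pow_succ]; exact mul_ne_zero'' ih hX

lemma one_div_singleton_mul {c : K} (hc : c ≠ 0) (X : FractionalIdeal A⁰ K) :
    1 / (FractionalIdeal.spanSingleton A⁰ c * X) =
      FractionalIdeal.spanSingleton A⁰ c⁻¹ * (1 / X) := by
  by_cases hX : X = 0
  · rw [hX, mul_zero, FractionalIdeal.div_zero, mul_zero]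
  have hc' : FractionalIdeal.spanSingleton A⁰ c ≠ 0 :=
    FractionalIdeal.spanSingleton_ne_zero_iff.mpr hc
  have hcX : FractionalIdeal.spanSingleton A⁰ c * X ≠ 0 := mul_ne_zero'' hc' hX
  apply le_antisymm
  · intro z hz
    have hz' : z ∈ 1 / (FractionalIdeal.spanSingleton A⁰ c * X) := hz
    rw [FractionalIdeal.mem_div_iff_of_ne_zero hcX] at hz'
    show z ∈ FractionalIdeal.spanSingleton A⁰ c⁻¹ * (1 / X)
    rw [FractionalIdeal.mem_singleton_mul]
    refine ⟨z * c, ?_, by field_simp⟩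
    rw [FractionalIdeal.mem_div_iff_of_ne_zero hX]
    intro y hy
    have := hz' (c * y) (FractionalIdeal.mem_singleton_mul.mpr ⟨y, hy, rfl⟩)
    rwa [show z * (c * y) = z * c * y by ring] at this
  · intro z hz
    have hz' : z ∈ FractionalIdeal.spanSingleton A⁰ c⁻¹ * (1 / X) := hz
    rw [FractionalIdeal.mem_singleton_mul] at hz'
    obtain ⟨u, hu, rfl⟩ := hz'
    show c⁻¹ * u ∈ 1 / (FractionalIdeal.spanSingleton A⁰ c * X)
    rw [FractionalIdeal.mem_div_iff_of_ne_zero hcX]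
    intro y hy
    rw [FractionalIdeal.mem_singleton_mul] at hy
    obtain ⟨v, hv, rfl⟩ := hy
    have := (FractionalIdeal.mem_div_iff_of_ne_zero hX).mp hu v hv
    rwa [show c⁻¹ * u * (c * v) = u * v by field_simp]

lemma vv_smul {c : K} (hc : c ≠ 0) (X : FractionalIdeal A⁰ K) :
    vv (FractionalIdeal.spanSingleton A⁰ c * X) =
      FractionalIdeal.spanSingleton A⁰ c * vv X := by
  show 1 / _ = _ * (1 / (1 / X))
  rw [one_div_singleton_mul hc, one_div_singleton_mul (inv_ne_zero hc), inv_inv]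

end Vmach2



section Vmach3
variable {A : Type*} [CommRing A] [IsDomain A]

local notation "K" => FractionRing A



lemma mem_one_div_iff {X : FractionalIdeal A⁰ K} (hX : X ≠ 0) {z : K} :
    z ∈ 1 / X ↔ FractionalIdeal.spanSingleton A⁰ z * X ≤ 1 := by
  rw [← FractionalIdeal.spanSingleton_le_iff_mem,
    FractionalIdeal.le_div_iff_mul_le hX]

lemma mem_span_self (z : K) : z ∈ FractionalIdeal.spanSingleton A⁰ z :=
  (FractionalIdeal.mem_spanSingleton _).mpr ⟨1, one_smul _ _⟩

lemma one_div_eq_one_of {M : FractionalIdeal A⁰ K} (hle : M ≤ 1) (hvv : 1 ≤ vv M) :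
    1 / M = 1 := by
  have hM : M ≠ 0 := by
    intro h
    rw [h, vv_zero] at hvv
    have h2 : (1:K) ∈ (0 : FractionalIdeal A⁰ K) :=
      hvv ((FractionalIdeal.mem_one_iff _).mpr ⟨1, map_one _⟩)
    simp at h2
  apply le_antisymm
  · intro z hz
    have hz' : z ∈ 1 / M := hz
    rw [mem_one_div_iff hM] at hz'
    by_cases hz0 : z = 0
    · rw [hz0]; exact FractionalIdeal.zero_mem _
    have h1 : FractionalIdeal.spanSingleton A⁰ z ≤ vv (FractionalIdeal.spanSingleton A⁰ z * M) := by
      rw [vv_smul hz0]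
      calc FractionalIdeal.spanSingleton A⁰ z
          = FractionalIdeal.spanSingleton A⁰ z * 1 := (mul_one _).symm
        _ ≤ _ := mul_right_mono hvv
    have h2 : vv (FractionalIdeal.spanSingleton A⁰ z * M) ≤ 1 := by
      calc vv (FractionalIdeal.spanSingleton A⁰ z * M) ≤ vv 1 := vv_mono hz'
        _ = 1 := vv_one
    exact (h1.trans h2) (mem_span_self z)
  · have h1 : (1 : FractionalIdeal A⁰ K) / 1 ≤ 1 / M := one_div_anti hM hle
    rwa [FractionalIdeal.div_one] at h1

lemma pow_le_one_of {M : FractionalIdeal A⁰ K} (hle : M ≤ 1) : ∀ k, M ^ k ≤ 1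
  | 0 => by rw [pow_zero]
  | (k+1) => by
      rw [pow_succ]
      calc M ^ k * M ≤ 1 * 1 := by
            exact le_trans (mul_right_mono hle)
              (mul_left_mono (pow_le_one_of hle k))
        _ = 1 := mul_one 1

lemma one_div_pow_eq_one {M : FractionalIdeal A⁰ K} (hM : M ≠ 0) (hle : M ≤ 1)
    (h1 : 1 / M = 1) : ∀ k, 1 / (M ^ k) = 1
  | 0 => by rw [pow_zero, FractionalIdeal.div_one]
  | (k+1) => by
      apply le_antisymm
      · intro z hz
        have hz' : z ∈ 1 / (M ^ (k+1)) := hz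
        rw [mem_one_div_iff (pow_ne_zero'' hM (k+1))] at hz'
        rw [pow_succ] at hz'
        have h3 : FractionalIdeal.spanSingleton A⁰ z * M ≤ 1 / (M ^ k) := by
          rw [FractionalIdeal.le_div_iff_mul_le (pow_ne_zero'' hM k)]
          calc FractionalIdeal.spanSingleton A⁰ z * M * M ^ k
              = FractionalIdeal.spanSingleton A⁰ z * (M ^ k * M) := by ring
            _ ≤ 1 := hz'
        rw [one_div_pow_eq_one hM hle h1 k] at h3
        have h4 : FractionalIdeal.spanSingleton A⁰ z * M ≤ 1 := h3
        have h5 : z ∈ 1 / M := (mem_one_div_iff hM).mpr h4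
        rwa [h1] at h5
      · have h6 : (1:FractionalIdeal A⁰ K) / 1 ≤ 1 / (M ^ (k+1)) :=
          one_div_anti (pow_ne_zero'' hM (k+1)) (pow_le_one_of hle (k+1))
        rwa [FractionalIdeal.div_one] at h6

lemma vv_pow_eq_one {M : FractionalIdeal A⁰ K} (hM : M ≠ 0) (hle : M ≤ 1)
    (h : vv M = 1) (m : ℕ) : vv (M ^ m) = 1 := by
  have h1 : 1 / M = 1 := one_div_eq_one_of hle (h ▸ le_refl _)
  show 1 / (1 / M ^ m) = 1
  rw [one_div_pow_eq_one hM hle h1 m, FractionalIdeal.div_one]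

lemma one_div_le_vv {Z W : FractionalIdeal A⁰ K} (hW : W ≠ 0)
    (h : vv (Z * W) = 1) : 1 / W ≤ vv Z := by
  intro u hu
  have hu' : u ∈ 1 / W := hu
  by_cases hu0 : u = 0
  · rw [hu0]; exact FractionalIdeal.zero_mem _
  rw [mem_one_div_iff hW] at hu'
  have h1 : FractionalIdeal.spanSingleton A⁰ u * (Z * W) ≤ Z := by
    calc FractionalIdeal.spanSingleton A⁰ u * (Z * W)
        = FractionalIdeal.spanSingleton A⁰ u * W * Z := by ring
      _ ≤ 1 * Z := mul_left_mono hu'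
      _ = Z := one_mul Z
  have h2 : FractionalIdeal.spanSingleton A⁰ u ≤ vv Z := by
    calc FractionalIdeal.spanSingleton A⁰ u
        = FractionalIdeal.spanSingleton A⁰ u * vv (Z * W) := by rw [h, mul_one]
      _ = vv (FractionalIdeal.spanSingleton A⁰ u * (Z * W)) := (vv_smul hu0 _).symm
      _ ≤ vv Z := vv_mono h1
  exact h2 (mem_span_self u)
end Vmach3



section MP
variable {A : Type*} [CommRing A]

lemma sup_pow_le_sup_pow (U V : Ideal A) : ∀ (m n : ℕ), (U ⊔ V) ^ (m + n) ≤ U ^ m ⊔ V ^ n := by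
  have key : ∀ (k m n : ℕ), m + n = k → (U ⊔ V) ^ k ≤ U ^ m ⊔ V ^ n := by
    intro k
    induction k with
    | zero =>
      intro m n hmn
      obtain ⟨rfl, rfl⟩ : m = 0 ∧ n = 0 := by omega
      simp
    | succ k ih =>
      intro m n hmn
      match m, n with
      | 0, n => simp
      | m, 0 => simp
      | (m'+1), (n'+1) =>
        rw [pow_succ]
        have h1 : (U ⊔ V) ^ k * (U ⊔ V) = (U ⊔ V) ^ k * U ⊔ (U ⊔ V) ^ k * V :=
          Submodule.mul_sup _ _ _
        rw [h1]
        apply sup_le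
        · have h2 : (U ⊔ V) ^ k ≤ U ^ m' ⊔ V ^ (n'+1) := ih m' (n'+1) (by omega)
          calc (U ⊔ V) ^ k * U ≤ (U ^ m' ⊔ V ^ (n'+1)) * U :=
                Ideal.mul_mono_left h2
            _ = U ^ m' * U ⊔ V ^ (n'+1) * U := Submodule.sup_mul _ _ _
            _ ≤ U ^ (m'+1) ⊔ V ^ (n'+1) := by
                apply sup_le
                · rw [← pow_succ]; exact le_sup_left
                · exact le_sup_of_le_right Ideal.mul_le_left
        · have h2 : (U ⊔ V) ^ k ≤ U ^ (m'+1) ⊔ V ^ n' := ih (m'+1) n' (by omega)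
          calc (U ⊔ V) ^ k * V ≤ (U ^ (m'+1) ⊔ V ^ n') * V :=
                Ideal.mul_mono_left h2
            _ = U ^ (m'+1) * V ⊔ V ^ n' * V := Submodule.sup_mul _ _ _
            _ ≤ U ^ (m'+1) ⊔ V ^ (n'+1) := by
                apply sup_le
                · exact le_sup_of_le_left Ideal.mul_le_left
                · rw [← pow_succ]; exact le_sup_right
  exact fun m n => key (m+n) m n rfl

lemma minimal_prime_pow_mem {Jb Q : Ideal A} (hQ : Q ∈ Jb.minimalPrimes) {u : A}
    (hu : u ∈ Q) : ∃ (k : ℕ) (s : A), s ∉ Q ∧ s * u ^ k ∈ Jb := by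
  have hQp : Q.IsPrime := hQ.1.1
  by_contra hcon
  push_neg at hcon
  set T : Submonoid A :=
    { carrier := {x | ∃ (k : ℕ) (s : A), s ∉ Q ∧ x = s * u ^ k}
      one_mem' := ⟨0, 1, fun h => hQp.ne_top (Ideal.eq_top_iff_one Q |>.mpr h), by ring⟩
      mul_mem' := by
        rintro x y ⟨k₁, s₁, hs₁, rfl⟩ ⟨k₂, s₂, hs₂, rfl⟩
        exact ⟨k₁ + k₂, s₁ * s₂, fun h => ((hQp.mem_or_mem h).elim hs₁ hs₂), by ring⟩ } with hT
  have hdisj : Disjoint (Jb : Set A) (T : Set A) := by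
    rw [Set.disjoint_left]
    rintro x hxJ ⟨k, s, hs, rfl⟩
    exact hcon k s hs hxJ
  obtain ⟨p, hp, hJp, hpT⟩ := Ideal.exists_le_prime_disjoint Jb T hdisj
  have hpQ : p ≤ Q := by
    intro x hxp
    by_contra hxQ
    exact Set.disjoint_left.mp hpT hxp ⟨0, x, hxQ, by ring⟩
  have hup : u ∉ p := fun h => Set.disjoint_left.mp hpT h ⟨1, 1, fun h1 =>
    hQp.ne_top (Ideal.eq_top_iff_one Q |>.mpr h1), by ring⟩
  exact hup (hQ.2 ⟨hp, hJp⟩ hpQ hu)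

lemma minimal_prime_fg_pow {Jb Q : Ideal A} (hQ : Q ∈ Jb.minimalPrimes) {C : Ideal A}
    (hCfg : C.FG) (hCQ : C ≤ Q) : ∃ (k : ℕ) (s₀ : A), s₀ ∉ Q ∧ ∀ y ∈ C ^ k, s₀ * y ∈ Jb := by
  classical
  obtain ⟨G, rfl⟩ := hCfg
  have hQp : Q.IsPrime := hQ.1.1
  induction G using Finset.induction with
  | empty =>
    refine ⟨1, 1, fun h => hQp.ne_top (Ideal.eq_top_iff_one Q |>.mpr h), ?_⟩
    intro y hy
    simp only [Finset.coe_empty, Ideal.span_empty, pow_one] at hy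
    have : y = 0 := by simpa using hy
    simpa [this] using Jb.zero_mem
  | @insert a G ha ih =>
    have haQ : a ∈ Q := hCQ (Ideal.subset_span (by simp))
    have hGQ : Ideal.span (↑G : Set A) ≤ Q :=
      le_trans (Ideal.span_mono (by exact_mod_cast Finset.subset_insert a G)) hCQ
    obtain ⟨k₂, s₂, hs₂, hV⟩ := ih hGQ
    obtain ⟨k₁, s₁, hs₁, hU⟩ := minimal_prime_pow_mem hQ haQ
    refine ⟨k₁ + k₂, s₁ * s₂, fun h => ((hQp.mem_or_mem h).elim hs₁ hs₂), ?_⟩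
    have hsplit : Ideal.span (↑(insert a G) : Set A) = Ideal.span {a} ⊔ Ideal.span (↑G : Set A) := by
      rw [Finset.coe_insert, Ideal.span_insert]
    intro y hy
    rw [hsplit] at hy
    have hy2 := sup_pow_le_sup_pow (Ideal.span {a}) (Ideal.span (↑G : Set A)) k₁ k₂ hy
    rw [Ideal.span_singleton_pow] at hy2
    -- y ∈ span {a^k₁} ⊔ (span G)^k₂
    obtain ⟨y₁, hy₁, y₂, hy₂, rfl⟩ := Submodule.mem_sup.mp hy2
    have h₁ : s₁ * s₂ * y₁ ∈ Jb := by
      obtain ⟨c, rfl⟩ := Ideal.mem_span_singleton'.mp hy₁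
      have : s₁ * (a ^ k₁) ∈ Jb := hU
      have h3 : (s₂ * c) * (s₁ * a ^ k₁) ∈ Jb := Jb.mul_mem_left _ this
      convert h3 using 1; ring
    have h₂ : s₁ * s₂ * y₂ ∈ Jb := by
      have h4 : s₁ * (s₂ * y₂) ∈ Jb := Jb.mul_mem_left _ (hV y₂ hy₂)
      convert h4 using 1; ring
    have := Jb.add_mem h₁ h₂
    convert this using 1; ring
end MP

section Misc
variable {A : Type*} [CommRing A] [IsDomain A]
local notation "K" => FractionRing A
local notation "φ" => algebraMap A K

lemma one_ne_zero_frac : (1 : FractionalIdeal A⁰ K) ≠ 0 := by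
  intro h
  have h2 : (1:K) ∈ (0 : FractionalIdeal A⁰ K) :=
    h ▸ (FractionalIdeal.mem_one_iff _).mpr ⟨1, map_one _⟩
  simp at h2

lemma mem_frac_of_mem_span {S : Set A} {X : FractionalIdeal A⁰ K}
    (h : ∀ y ∈ S, φ y ∈ X) {u : A} (hu : u ∈ Ideal.span S) : φ u ∈ X := by
  induction hu using Submodule.span_induction with
  | mem x hx => exact h x hx
  | zero => rw [map_zero]; exact FractionalIdeal.mem_coe.mp ((X : Submodule A K).zero_mem)
  | add x y hx hy ihx ihy =>
      rw [map_add]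
      exact FractionalIdeal.mem_coe.mp ((X : Submodule A K).add_mem
        (FractionalIdeal.mem_coe.mpr ihx) (FractionalIdeal.mem_coe.mpr ihy))
  | smul r x hx ih =>
      rw [smul_eq_mul, map_mul, ← Algebra.smul_def]
      exact FractionalIdeal.mem_coe.mp ((X : Submodule A K).smul_mem r
        (FractionalIdeal.mem_coe.mpr ih))

lemma coeIdeal_le_of_gens {S : Set A} {X : FractionalIdeal A⁰ K}
    (h : ∀ y ∈ S, φ y ∈ X) : ((Ideal.span S : Ideal A) : FractionalIdeal A⁰ K) ≤ X := by
  intro z hz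
  have hz' : z ∈ ((Ideal.span S : Ideal A) : FractionalIdeal A⁰ K) := hz
  obtain ⟨u, hu, rfl⟩ := (FractionalIdeal.mem_coeIdeal _).mp hz'
  exact mem_frac_of_mem_span h hu

lemma one_div_coe_pow_le_one {C : Ideal A} (hC0 : (C : FractionalIdeal A⁰ K) ≠ 0)
    (hvvC : (1 : FractionalIdeal A⁰ K) ≤ vv (C : FractionalIdeal A⁰ K)) :
    ∀ k, 1 / ((C : FractionalIdeal A⁰ K)) ^ k ≤ 1 := by
  have hle : (C : FractionalIdeal A⁰ K) ≤ 1 := FractionalIdeal.coeIdeal_le_one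
  have h1 : 1 / (C : FractionalIdeal A⁰ K) = 1 := by
    apply le_antisymm
    · calc 1 / (C : FractionalIdeal A⁰ K)
          ≤ 1 / (1 / (1 / (C : FractionalIdeal A⁰ K))) := le_vv _
        _ ≤ 1 / (1:FractionalIdeal A⁰ K) := one_div_anti one_ne_zero_frac hvvC
        _ = 1 := FractionalIdeal.div_one
    · have := one_div_anti hC0 hle
      rwa [FractionalIdeal.div_one] at this
  intro k
  rw [one_div_pow_eq_one hC0 hle h1 k]
end Misc

section StepA
open scoped Pointwise
variable {A : Type*} [CommRing A] [IsDomain A]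
local notation "K" => FractionRing A
local notation "φ" => algebraMap A K

lemma not_mem_P_one {P : Ideal A} (hP : P.IsPrime) : (1:A) ∉ P :=
  fun h => hP.ne_top ((Ideal.eq_top_iff_one _).mpr h)

lemma stepA (hA : IsPVMD A) {B : Subalgebra A K} (hGD : GoingDownOverring A B)
    (N : Ideal B) (hN : N.IsPrime) {b : K} (hb : b ∈ B) :
    b ∈ locSet A K (N.comap (algebraMap A B)) := by
  classical
  set P : Ideal A := N.comap (algebraMap A B) with hPdef
  have hP : P.IsPrime := hN.comap _
  by_cases hb0 : b = 0
  · exact ⟨0, 1, not_mem_P_one hP, by simp [hb0]⟩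
  obtain ⟨α, β, hβmem, hbeq⟩ := IsFractionRing.div_surjective (A := A) b
  have hβ0 : β ≠ 0 := mem_nonZeroDivisors_iff_ne_zero.mp hβmem
  have hφβ0 : φ β ≠ 0 := fun h => hβ0 (IsFractionRing.to_map_eq_zero_iff.mp h)
  by_contra hbP
  set Jb : Ideal A := (Ideal.span {β}).colon (Ideal.span {α}) with hJbdef
  have hJbiff : ∀ r : A, r ∈ Jb ↔ ∃ e, e * β = r * α := by
    intro r
    rw [hJbdef, Ideal.mem_colon_span_singleton, Ideal.mem_span_singleton']

  have hJbP : Jb ≤ P := by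
    intro r hr
    by_contra hrP
    obtain ⟨e, he⟩ := (hJbiff r).mp hr
    refine hbP ⟨e, r, hrP, ?_⟩
    rw [← hbeq, div_mul_eq_mul_div, div_eq_iff hφβ0, ← map_mul, ← map_mul]
    exact congrArg φ (by rw [mul_comm α r]; exact he.symm)
  obtain ⟨Q, hQmin, hQP⟩ := Ideal.exists_minimalPrimes_le hJbP
  have hQp : Q.IsPrime := hQmin.1.1
  have hJbQ : Jb ≤ Q := hQmin.1.2
  -- PVMD witnesses for I' = span {α, β}
  have hI'0 : Ideal.span {α, β} ≠ (⊥ : Ideal A) := by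
    intro h
    have hβin : β ∈ Ideal.span {α, β} := Ideal.subset_span (by simp)
    rw [h] at hβin
    exact hβ0 (by simpa using hβin)
  have hI'fg : (Ideal.span {α, β} : Ideal A).FG := ⟨{α, β}, by simp⟩
  obtain ⟨J', hJ'0, hJ'fg, w, hw⟩ := hA _ hI'0 hI'fg
  have hvvX : vv ((Ideal.span {α, β} * J' : Ideal A) : FractionalIdeal A⁰ K) =
      FractionalIdeal.spanSingleton A⁰ w := by
    show (1:FractionalIdeal A⁰ K) / (1 / _) = _
    rw [FractionalIdeal.coeIdeal_mul]
    exact hw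
  have hX0 : ((Ideal.span {α, β} * J' : Ideal A) : FractionalIdeal A⁰ K) ≠ 0 := by
    rw [FractionalIdeal.coeIdeal_mul]
    exact mul_ne_zero'' (by rwa [ne_eq, FractionalIdeal.coeIdeal_eq_zero])
      (by rwa [ne_eq, FractionalIdeal.coeIdeal_eq_zero])
  have hw0 : w ≠ 0 := by
    intro h
    rw [h, FractionalIdeal.spanSingleton_zero] at hvvX
    exact hX0 (le_antisymm (hvvX ▸ le_vv _) (FractionalIdeal.zero_le _))
  obtain ⟨G, hG⟩ := hJ'fg
  have hcd : ∀ j ∈ G, ∃ c d : A, (φ c * w = φ α * φ j ∧ φ d * w = φ β * φ j) ∧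
      c * β = d * α ∧ d ∈ Q := by
    intro j hjG
    have hjJ' : j ∈ J' := hG ▸ Ideal.subset_span (by exact_mod_cast hjG)
    have hαj : α * j ∈ Ideal.span {α, β} * J' :=
      Ideal.mul_mem_mul (Ideal.subset_span (by simp)) hjJ'
    have hβj : β * j ∈ Ideal.span {α, β} * J' :=
      Ideal.mul_mem_mul (Ideal.subset_span (by simp)) hjJ'
    have hmα : φ (α * j) ∈ FractionalIdeal.spanSingleton A⁰ w :=
      hvvX ▸ (le_vv _ ((FractionalIdeal.mem_coeIdeal _).mpr ⟨α * j, hαj, rfl⟩))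
    have hmβ : φ (β * j) ∈ FractionalIdeal.spanSingleton A⁰ w :=
      hvvX ▸ (le_vv _ ((FractionalIdeal.mem_coeIdeal _).mpr ⟨β * j, hβj, rfl⟩))
    obtain ⟨c, hc⟩ := (FractionalIdeal.mem_spanSingleton _).mp hmα
    obtain ⟨d, hd⟩ := (FractionalIdeal.mem_spanSingleton _).mp hmβ
    rw [Algebra.smul_def] at hc hd
    have hc' : φ c * w = φ α * φ j := by rw [hc, map_mul]
    have hd' : φ d * w = φ β * φ j := by rw [hd, map_mul]
    have hkey : c * β = d * α := by
      apply IsFractionRing.injective A K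
      apply mul_right_cancel₀ hw0
      rw [map_mul, map_mul]
      calc φ c * φ β * w = φ β * (φ c * w) := by ring
        _ = φ β * (φ α * φ j) := by rw [hc']
        _ = φ α * (φ β * φ j) := by ring
        _ = φ α * (φ d * w) := by rw [hd']
        _ = φ d * φ α * w := by ring
    exact ⟨c, d, ⟨hc', hd'⟩, hkey, hJbQ ((hJbiff d).mpr ⟨c, hkey⟩)⟩
  choose! c d hcdw hkey hdQ using hcd
  by_cases hall : ∀ j ∈ G, c j ∈ Q
  · -- all c j ∈ Q : contradiction via minimal prime argument
    set CS : Finset A := G.image c ∪ G.image d with hCSdef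
    set C : Ideal A := Ideal.span (CS : Set A) with hCdef
    have hCQ : C ≤ Q := by
      rw [hCdef, Ideal.span_le]
      intro x hx
      simp only [hCSdef, Finset.coe_union, Set.mem_union, Finset.coe_image,
        Set.mem_image, Finset.mem_coe] at hx
      rcases hx with ⟨j, hj, rfl⟩ | ⟨j, hj, rfl⟩
      · exact hall j hj
      · exact hdQ j hj
    have hCfg : C.FG := ⟨CS, rfl⟩
    have hstep1 : ((Ideal.span {α, β} * J' : Ideal A) : FractionalIdeal A⁰ K) ≤
        FractionalIdeal.spanSingleton A⁰ w * (C : FractionalIdeal A⁰ K) := by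
      rw [show Ideal.span {α, β} * J' = Ideal.span (({α, β} : Set A) * (G : Set A)) by
        rw [← hG, Ideal.span_mul_span']]
      apply coeIdeal_le_of_gens
      intro y hy
      rw [Set.mem_mul] at hy
      obtain ⟨x, hx, g, hg, rfl⟩ := hy
      have hgG : g ∈ G := hg
      have hcC : ∀ z ∈ CS, φ z ∈ (C : FractionalIdeal A⁰ K) := fun z hz =>
        (FractionalIdeal.mem_coeIdeal _).mpr ⟨z, Ideal.subset_span hz, rfl⟩
      rcases hx with rfl | hx
      · -- x = α
        have : φ (x * g) = w * φ (c g) := by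
          rw [map_mul, ← (hcdw g hgG).1]; ring
        rw [this]
        exact FractionalIdeal.mul_mem_mul (mem_span_self w)
          (hcC _ (by simp [hCSdef]; exact Or.inl ⟨g, hgG, rfl⟩))
      · -- x = β
        have hx' : x = β := by simpa using hx
        subst hx'
        have : φ (x * g) = w * φ (d g) := by
          rw [map_mul, ← (hcdw g hgG).2]; ring
        rw [this]
        exact FractionalIdeal.mul_mem_mul (mem_span_self w)
          (hcC _ (by simp [hCSdef]; exact Or.inr ⟨g, hgG, rfl⟩))
    have hvvC1 : (1 : FractionalIdeal A⁰ K) ≤ vv (C : FractionalIdeal A⁰ K) := by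
      have h2 : FractionalIdeal.spanSingleton A⁰ w ≤
          FractionalIdeal.spanSingleton A⁰ w * vv (C : FractionalIdeal A⁰ K) := by
        calc FractionalIdeal.spanSingleton A⁰ w
            = vv ((Ideal.span {α, β} * J' : Ideal A) : FractionalIdeal A⁰ K) := hvvX.symm
          _ ≤ vv (FractionalIdeal.spanSingleton A⁰ w * (C : FractionalIdeal A⁰ K)) :=
              vv_mono hstep1
          _ = FractionalIdeal.spanSingleton A⁰ w * vv (C : FractionalIdeal A⁰ K) :=
              vv_smul hw0 _
      have h3 := mul_right_mono
        (a := FractionalIdeal.spanSingleton A⁰ w⁻¹) h2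
      dsimp only at h3
      rwa [← mul_assoc, FractionalIdeal.spanSingleton_mul_spanSingleton,
        inv_mul_cancel₀ hw0, FractionalIdeal.spanSingleton_one, one_mul] at h3
    have hC0 : (C : FractionalIdeal A⁰ K) ≠ 0 := by
      intro h
      rw [h, vv_zero] at hvvC1
      exact one_ne_zero_frac (le_antisymm hvvC1 (FractionalIdeal.zero_le _))
    obtain ⟨k, s₀, hs₀Q, hMP⟩ := minimal_prime_fg_pow hQmin hCfg hCQ
    have hyy : φ s₀ * φ α * (φ β)⁻¹ ∈ (1 : FractionalIdeal A⁰ K) := by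
      refine one_div_coe_pow_le_one hC0 hvvC1 k ?_
      show φ s₀ * φ α * (φ β)⁻¹ ∈ 1 / ((C : FractionalIdeal A⁰ K)) ^ k
      rw [FractionalIdeal.mem_div_iff_of_ne_zero (pow_ne_zero'' hC0 k)]
      intro y hy
      rw [← FractionalIdeal.coeIdeal_pow] at hy
      obtain ⟨u, hu, rfl⟩ := (FractionalIdeal.mem_coeIdeal _).mp hy
      obtain ⟨e, he⟩ := (hJbiff (s₀ * u)).mp (hMP u hu)
      refine (FractionalIdeal.mem_one_iff _).mpr ⟨e, mul_right_cancel₀ hφβ0 ?_⟩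
      rw [show φ s₀ * φ α * (φ β)⁻¹ * φ u * φ β = φ s₀ * φ u * φ α * ((φ β)⁻¹ * φ β) from by
        ring, inv_mul_cancel₀ hφβ0, mul_one]
      calc φ e * φ β = φ (e * β) := (map_mul φ e β).symm
        _ = φ (s₀ * u * α) := congrArg φ he
        _ = φ s₀ * φ u * φ α := by rw [map_mul, map_mul]
    obtain ⟨e₀, he₀⟩ := (FractionalIdeal.mem_one_iff _).mp hyy
    have hs₀Jb : s₀ ∈ Jb := by
      refine (hJbiff s₀).mpr ⟨e₀, IsFractionRing.injective A K ?_⟩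
      rw [map_mul, map_mul, he₀]
      rw [show φ s₀ * φ α * (φ β)⁻¹ * φ β = φ s₀ * φ α * ((φ β)⁻¹ * φ β) from by ring,
        inv_mul_cancel₀ hφβ0, mul_one]
    exact hs₀Q (hJbQ hs₀Jb)
  · push_neg at hall
    obtain ⟨j, hjG, hcQ⟩ := hall
    obtain ⟨Q', hQ'p, hQ'N, hQ'comap⟩ := hGD Q P hQp hP hQP N hN rfl
    have hdQ' : algebraMap A B (d j) ∈ Q' := by
      have : d j ∈ Q'.comap (algebraMap A B) := hQ'comap ▸ hdQ j hjG
      exact Ideal.mem_comap.mp this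
    have hbd : (⟨b, hb⟩ : B) * algebraMap A B (d j) = algebraMap A B (c j) := by
      apply Subtype.ext
      show b * φ (d j) = φ (c j)
      rw [← hbeq, div_mul_eq_mul_div, div_eq_iff hφβ0, ← map_mul, ← map_mul]
      refine congrArg φ ?_
      rw [mul_comm α (d j)]
      exact (hkey j hjG).symm
    have hcQ' : algebraMap A B (c j) ∈ Q' := hbd ▸ Ideal.mul_mem_left Q' _ hdQ'
    exact hcQ (by rw [← hQ'comap]; exact Ideal.mem_comap.mpr hcQ')
end StepA


section LemmaT
variable {A : Type*} [CommRing A] [IsDomain A]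
local notation "K" => FractionRing A
local notation "φ" => algebraMap A K

lemma mem_one_div_singleton {y₀ : K} (hy : y₀ ≠ 0) {x : K} :
    x ∈ 1 / FractionalIdeal.spanSingleton A⁰ y₀ ↔ x * y₀ ∈ (1 : FractionalIdeal A⁰ K) := by
  rw [FractionalIdeal.mem_div_iff_of_ne_zero (FractionalIdeal.spanSingleton_ne_zero_iff.mpr hy)]
  constructor
  · intro h; exact h y₀ (mem_span_self y₀)
  · intro h v hv
    obtain ⟨r, rfl⟩ := (FractionalIdeal.mem_spanSingleton _).mp hv
    rw [show x * (r • y₀) = r • (x * y₀) from by rw [Algebra.smul_def, Algebra.smul_def]; ring]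
    exact FractionalIdeal.mem_coe.mp
      (((1 : FractionalIdeal A⁰ K) : Submodule A K).smul_mem r (FractionalIdeal.mem_coe.mpr h))

lemma lemmaT (hA : IsPVMD A) {B : Subalgebra A K} (hGD : GoingDownOverring A B)
    {I₀ : Ideal A} (hI₀ : I₀ ≠ ⊥) (hfg : I₀.FG) {τ : A} (hτ : τ ≠ 0)
    (hsub : ∀ i ∈ I₀, φ i * (φ τ)⁻¹ ∈ B) {z : K}
    (hz : z * φ τ ∈ vv (I₀ : FractionalIdeal A⁰ K)) : z ∈ B := by
  classical
  by_cases hzB : z ∈ B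
  · exact hzB
  exfalso
  have hφτ0 : φ τ ≠ 0 := fun h => hτ (IsFractionRing.to_map_eq_zero_iff.mp h)
  set D : Ideal B := {
    carrier := {β : B | z * (β : K) ∈ B}
    add_mem' := fun {x y} hx hy => by
      show z * ((x + y : B) : K) ∈ B
      rw [show ((x + y : B) : K) = (x : K) + (y : K) from rfl, mul_add]
      exact B.add_mem hx hy
    zero_mem' := by
      show z * ((0 : B) : K) ∈ B
      rw [show ((0 : B) : K) = 0 from rfl, mul_zero]
      exact B.zero_mem
    smul_mem' := fun c x hx => by
      show z * ((c • x : B) : K) ∈ B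
      rw [show ((c • x : B) : K) = (c : K) * (x : K) from rfl,
        show z * ((c : K) * (x : K)) = (c : K) * (z * (x : K)) from by ring]
      exact B.mul_mem c.2 hx } with hDdef
  have hD1 : (1 : B) ∉ D := by
    intro h
    have : z * ((1 : B) : K) ∈ B := h
    rw [show ((1 : B) : K) = 1 from rfl, mul_one] at this
    exact hzB this
  have hDne : D ≠ ⊤ := fun h => hD1 (h ▸ Submodule.mem_top)
  obtain ⟨N, hNmax, hDN⟩ := Ideal.exists_le_maximal D hDne
  have hN : N.IsPrime := hNmax.isPrime
  set P : Ideal A := N.comap (algebraMap A B) with hPdef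
  have hPp : P.IsPrime := hN.comap _
  obtain ⟨G, hG⟩ := hfg
  have hloc : ∀ g ∈ G, ∃ a s : A, s ∉ P ∧ (φ g * (φ τ)⁻¹) * φ s = φ a := by
    intro g hg
    exact stepA hA hGD N hN (hsub g (hG ▸ Ideal.subset_span (by exact_mod_cast hg)))
  choose! aa ss hssP haa using hloc
  set S₀ : A := ∏ g ∈ G, ss g with hS₀def
  have hS₀P : S₀ ∉ P := by
    intro h
    obtain ⟨g, hgG, hgP⟩ := (Ideal.IsPrime.prod_mem_iff).mp h
    exact hssP g hgG hgP
  have hS₀0 : S₀ ≠ 0 := fun h => hS₀P (h ▸ P.zero_mem)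
  have hφS₀0 : φ S₀ ≠ 0 := fun h => hS₀0 (IsFractionRing.to_map_eq_zero_iff.mp h)
  have hy₀0 : φ S₀ * (φ τ)⁻¹ ≠ 0 := mul_ne_zero hφS₀0 (inv_ne_zero hφτ0)
  have hI₀0 : (I₀ : FractionalIdeal A⁰ K) ≠ 0 := by
    rwa [ne_eq, FractionalIdeal.coeIdeal_eq_zero]
  have hy₀ : φ S₀ * (φ τ)⁻¹ ∈ 1 / (I₀ : FractionalIdeal A⁰ K) := by
    rw [FractionalIdeal.mem_div_iff_of_ne_zero hI₀0]
    intro y hy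
    obtain ⟨u, hu, rfl⟩ := (FractionalIdeal.mem_coeIdeal _).mp hy
    have hu' : u ∈ Ideal.span (G : Set A) := hG.symm ▸ hu
    have hmem : φ u ∈ 1 / FractionalIdeal.spanSingleton A⁰ (φ S₀ * (φ τ)⁻¹) := by
      refine mem_frac_of_mem_span (fun g hg => ?_) hu'
      have hgG : g ∈ G := hg
      rw [mem_one_div_singleton hy₀0]
      have hSsplit : S₀ = ss g * ∏ h ∈ G.erase g, ss h :=
        (Finset.mul_prod_erase G ss hgG).symm
      refine (FractionalIdeal.mem_one_iff _).mpr ⟨(∏ h ∈ G.erase g, ss h) * aa g, ?_⟩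
      rw [map_mul, ← haa g hgG, hS₀def]
      rw [show ∏ g ∈ G, ss g = ss g * ∏ h ∈ G.erase g, ss h from hSsplit, map_mul]
      ring
    have := (mem_one_div_singleton hy₀0).mp hmem
    rwa [show φ u * (φ S₀ * (φ τ)⁻¹) = φ S₀ * (φ τ)⁻¹ * φ u from by ring] at this
  have h1div0 : (1 : FractionalIdeal A⁰ K) / (I₀ : FractionalIdeal A⁰ K) ≠ 0 :=
    one_div_ne_zero_aux hI₀0
  have hzy : z * φ τ * (φ S₀ * (φ τ)⁻¹) ∈ (1 : FractionalIdeal A⁰ K) :=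
    (FractionalIdeal.mem_div_iff_of_ne_zero h1div0).mp hz _ hy₀
  obtain ⟨cc, hcc⟩ := (FractionalIdeal.mem_one_iff _).mp hzy
  have hzS : z * φ S₀ = φ cc := by
    rw [hcc, show z * φ τ * (φ S₀ * (φ τ)⁻¹) = z * φ S₀ * (φ τ * (φ τ)⁻¹) from by ring,
      mul_inv_cancel₀ hφτ0, mul_one]
  have hσN : algebraMap A B S₀ ∉ N := fun h => hS₀P (Ideal.mem_comap.mpr h)
  have hσD : algebraMap A B S₀ ∈ D := by
    show z * ((algebraMap A B S₀ : B) : K) ∈ B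
    rw [show ((algebraMap A B S₀ : B) : K) = φ S₀ from rfl, hzS]
    exact B.algebraMap_mem cc
  exact hσN (hDN hσD)
end LemmaT

section MainSurj
variable {A : Type*} [CommRing A] [IsDomain A]
local notation "K" => FractionRing A
local notation "φ" => algebraMap A K

lemma mem_singleton_mul' {c x : K} (hc : c ≠ 0) {X : FractionalIdeal A⁰ K} :
    x ∈ FractionalIdeal.spanSingleton A⁰ c * X ↔ c⁻¹ * x ∈ X := by
  rw [FractionalIdeal.mem_singleton_mul]
  constructor
  · rintro ⟨y, hy, rfl⟩
    rwa [show c⁻¹ * (c * y) = y from by field_simp]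
  · intro h
    exact ⟨c⁻¹ * x, h, by field_simp⟩

lemma main_surj (hA : IsPVMD A)
    (hcond : ∀ I : Ideal A, I ≠ ⊥ → I.FG → ∃ n : ℕ, 1 ≤ n ∧ ∃ b : A,
      I ^ n ≤ Ideal.span {b} ∧ ((Ideal.span {b} : Ideal A) : FractionalIdeal A⁰ K) ≤
        1 / (1 / (I : FractionalIdeal A⁰ K)))
    {B : Subalgebra A K} (hGD : GoingDownOverring A B) {x : K} (hx : x ∈ B) (hx0 : x ≠ 0) :
    ∃ s a' : A, (φ s)⁻¹ ∈ B ∧ φ s ≠ 0 ∧ φ s * x = φ a' := by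
  classical
  obtain ⟨a, t, htmem, heq⟩ := IsFractionRing.div_surjective (A := A) x
  have ht0 : t ≠ 0 := mem_nonZeroDivisors_iff_ne_zero.mp htmem
  have hφt0 : φ t ≠ 0 := fun h => ht0 (IsFractionRing.to_map_eq_zero_iff.mp h)
  have ha0 : a ≠ 0 := by
    intro h; apply hx0; rw [← heq, h, map_zero, zero_div]
  have hxt : x * φ t = φ a := by rw [← heq]; field_simp
  set I : Ideal A := Ideal.span {a, t} with hIdef
  have hI0 : I ≠ ⊥ := by
    intro h
    have : t ∈ I := Ideal.subset_span (by simp)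
    rw [h] at this
    exact ht0 (by simpa using this)
  have hIfg : I.FG := ⟨{a, t}, by simp [hIdef]⟩
  obtain ⟨J, hJ0, hJfg, w, hw⟩ := hA I hI0 hIfg
  have hvvX : vv ((I * J : Ideal A) : FractionalIdeal A⁰ K) =
      FractionalIdeal.spanSingleton A⁰ w := by
    show (1 : FractionalIdeal A⁰ K) / (1 / _) = _
    rw [FractionalIdeal.coeIdeal_mul]
    exact hw
  have hX0 : ((I * J : Ideal A) : FractionalIdeal A⁰ K) ≠ 0 := by
    rw [FractionalIdeal.coeIdeal_mul]
    exact mul_ne_zero'' (by rwa [ne_eq, FractionalIdeal.coeIdeal_eq_zero])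
      (by rwa [ne_eq, FractionalIdeal.coeIdeal_eq_zero])
  have hw0 : w ≠ 0 := by
    intro h
    rw [h, FractionalIdeal.spanSingleton_zero] at hvvX
    exact hX0 (le_antisymm (hvvX ▸ le_vv _) (FractionalIdeal.zero_le _))
  obtain ⟨G, hG⟩ := hJfg
  have hE : ∀ j ∈ G, ∃ ej : A, φ ej * w = φ t * φ j := by
    intro j hjG
    have hjJ : j ∈ J := hG ▸ Ideal.subset_span (by exact_mod_cast hjG)
    have htj : t * j ∈ I * J :=
      Ideal.mul_mem_mul (Ideal.subset_span (by simp)) hjJ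
    have hm : φ (t * j) ∈ FractionalIdeal.spanSingleton A⁰ w :=
      hvvX ▸ (le_vv _ ((FractionalIdeal.mem_coeIdeal _).mpr ⟨t * j, htj, rfl⟩))
    obtain ⟨ej, hej⟩ := (FractionalIdeal.mem_spanSingleton _).mp hm
    rw [Algebra.smul_def] at hej
    exact ⟨ej, by rw [hej, map_mul]⟩
  choose! e he using hE
  set E : Ideal A := Ideal.span ((G.image e : Finset A) : Set A) with hEdef
  have hEfg : E.FG := ⟨G.image e, rfl⟩
  have hEfrac : (E : FractionalIdeal A⁰ K) =
      FractionalIdeal.spanSingleton A⁰ (φ t * w⁻¹) * (J : FractionalIdeal A⁰ K) := by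
    have htw0 : φ t * w⁻¹ ≠ 0 := mul_ne_zero hφt0 (inv_ne_zero hw0)
    apply le_antisymm
    · rw [hEdef]
      apply coeIdeal_le_of_gens
      intro y hy
      simp only [Finset.coe_image, Set.mem_image, Finset.mem_coe] at hy
      obtain ⟨j, hjG, rfl⟩ := hy
      rw [mem_singleton_mul' htw0]
      have h5 : φ (e j) = φ t * φ j * w⁻¹ := by
        rw [← he j hjG]; field_simp
      have : (φ t * w⁻¹)⁻¹ * φ (e j) = φ j := by
        rw [h5]; field_simp
      rw [this]
      have hjJ : j ∈ J := hG ▸ Ideal.subset_span (by exact_mod_cast hjG)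
      exact (FractionalIdeal.mem_coeIdeal _).mpr ⟨j, hjJ, rfl⟩
    · intro z hz
      have hz' : z ∈ FractionalIdeal.spanSingleton A⁰ (φ t * w⁻¹) *
          (J : FractionalIdeal A⁰ K) := hz
      rw [mem_singleton_mul' htw0] at hz'
      obtain ⟨u, hu, huz⟩ := (FractionalIdeal.mem_coeIdeal _).mp hz'
      have hu' : u ∈ Ideal.span (G : Set A) := hG.symm ▸ hu
      show z ∈ (E : FractionalIdeal A⁰ K)
      have hz'' : φ u ∈ FractionalIdeal.spanSingleton A⁰ (φ t * w⁻¹)⁻¹ *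
          (E : FractionalIdeal A⁰ K) := by
        refine mem_frac_of_mem_span (fun g hg => ?_) hu'
        have hgG : g ∈ G := hg
        rw [mem_singleton_mul' (inv_ne_zero htw0), inv_inv]
        have h5 : φ (e g) = φ t * φ g * w⁻¹ := by
          rw [← he g hgG]; field_simp
        have : (φ t * w⁻¹) * φ g = φ (e g) := by
          rw [h5]; ring
        rw [this]
        exact (FractionalIdeal.mem_coeIdeal _).mpr
          ⟨e g, Ideal.subset_span (by simp [hEdef]; exact ⟨g, hgG, rfl⟩), rfl⟩
      rw [mem_singleton_mul' (inv_ne_zero htw0), inv_inv] at hz''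
      rwa [show (φ t * w⁻¹) * φ u = z from by rw [huz]; exact mul_inv_cancel_left₀ htw0 z] at hz''
  have hE0 : E ≠ ⊥ := by
    intro h
    rw [h] at hEfrac
    have : ((⊥ : Ideal A) : FractionalIdeal A⁰ K) = 0 := by
      rw [FractionalIdeal.coeIdeal_eq_zero]
    rw [this] at hEfrac
    have hJ0' : (J : FractionalIdeal A⁰ K) ≠ 0 := by
      rwa [ne_eq, FractionalIdeal.coeIdeal_eq_zero]
    exact mul_ne_zero''
      (FractionalIdeal.spanSingleton_ne_zero_iff.mpr (mul_ne_zero hφt0 (inv_ne_zero hw0)))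
      hJ0' hEfrac.symm
  -- the fractional ideals Hf and M
  set Hf : FractionalIdeal A⁰ K := FractionalIdeal.spanSingleton A⁰ x + 1 with hHfdef
  have hHfeq : FractionalIdeal.spanSingleton A⁰ (φ t)⁻¹ * (I : FractionalIdeal A⁰ K) = Hf := by
    rw [hIdef, show ({a, t} : Set A) = insert a {t} from rfl, Ideal.span_insert,
      FractionalIdeal.coeIdeal_sup, mul_add, FractionalIdeal.coeIdeal_span_singleton,
      FractionalIdeal.coeIdeal_span_singleton,
      FractionalIdeal.spanSingleton_mul_spanSingleton,
      FractionalIdeal.spanSingleton_mul_spanSingleton,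
      inv_mul_cancel₀ hφt0, FractionalIdeal.spanSingleton_one]
    congr 1
    rw [show (φ t)⁻¹ * φ a = φ a / φ t from by ring, heq]
  set M : FractionalIdeal A⁰ K :=
    FractionalIdeal.spanSingleton A⁰ w⁻¹ * ((I * J : Ideal A) : FractionalIdeal A⁰ K)
    with hMdef
  have hMvv : vv M = 1 := by
    rw [hMdef, vv_smul (inv_ne_zero hw0), hvvX,
      FractionalIdeal.spanSingleton_mul_spanSingleton, inv_mul_cancel₀ hw0,
      FractionalIdeal.spanSingleton_one]
  have hM1 : M ≤ 1 := hMvv ▸ le_vv M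
  have hM0 : M ≠ 0 :=
    mul_ne_zero'' (FractionalIdeal.spanSingleton_ne_zero_iff.mpr (inv_ne_zero hw0)) hX0
  have hMeq : Hf * (E : FractionalIdeal A⁰ K) = M := by
    rw [← hHfeq, hEfrac, hMdef, FractionalIdeal.coeIdeal_mul, mul_mul_mul_comm,
      FractionalIdeal.spanSingleton_mul_spanSingleton]
    congr 2
    field_simp
  -- apply hcond to E
  obtain ⟨m, hm1, s, hs1, hs2⟩ := hcond E hE0 hEfg
  have hcoeE0 : (E : FractionalIdeal A⁰ K) ≠ 0 := by
    rwa [ne_eq, FractionalIdeal.coeIdeal_eq_zero]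
  have hs0 : s ≠ 0 := by
    intro h
    rw [h] at hs1
    have : E ^ m = ⊥ := le_bot_iff.mp (by rwa [Ideal.span_singleton_eq_bot.mpr rfl] at hs1)
    have h2 := pow_ne_zero'' hcoeE0 m
    rw [← FractionalIdeal.coeIdeal_pow, this, FractionalIdeal.coeIdeal_bot] at h2
    exact h2 rfl
  have hφs0 : φ s ≠ 0 := fun h => hs0 (IsFractionRing.to_map_eq_zero_iff.mp h)
  have hs2' : φ s ∈ vv (E : FractionalIdeal A⁰ K) := by
    have := hs2 ((FractionalIdeal.mem_coeIdeal _).mpr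
      ⟨s, Ideal.subset_span rfl, rfl⟩)
    exact this
  -- C1 : φ s * x ∈ 1
  have hsx : φ s * x ∈ (1 : FractionalIdeal A⁰ K) := by
    have h1 : φ s * x ∈ FractionalIdeal.spanSingleton A⁰ x * vv (E : FractionalIdeal A⁰ K) :=
      FractionalIdeal.mem_singleton_mul.mpr ⟨φ s, hs2', by ring⟩
    rw [← vv_smul hx0] at h1
    have h2 : FractionalIdeal.spanSingleton A⁰ x * (E : FractionalIdeal A⁰ K) ≤ M := by
      rw [hEfrac, ← mul_assoc, FractionalIdeal.spanSingleton_mul_spanSingleton,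
        show x * (φ t * w⁻¹) = φ a * w⁻¹ from by rw [← mul_assoc, hxt],
        hMdef, FractionalIdeal.coeIdeal_mul, ← mul_assoc]
      apply mul_left_mono
      rw [show FractionalIdeal.spanSingleton A⁰ (φ a * w⁻¹) =
        FractionalIdeal.spanSingleton A⁰ w⁻¹ * FractionalIdeal.spanSingleton A⁰ (φ a) from by
          rw [FractionalIdeal.spanSingleton_mul_spanSingleton]; ring_nf]
      apply mul_right_mono
      rw [← FractionalIdeal.coeIdeal_span_singleton]
      exact (FractionalIdeal.coeIdeal_le_coeIdeal K).mpr
        (Ideal.span_mono (by simp [Set.subset_def]))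
    have h3 : vv (FractionalIdeal.spanSingleton A⁰ x * (E : FractionalIdeal A⁰ K)) ≤ 1 :=
      hMvv ▸ vv_mono h2
    exact h3 h1
  obtain ⟨a', ha'⟩ := (FractionalIdeal.mem_one_iff _).mp hsx
  -- C2 : (φ s)⁻¹ ∈ B
  have hsinvE : (φ s)⁻¹ ∈ 1 / ((E : FractionalIdeal A⁰ K)) ^ m := by
    rw [FractionalIdeal.mem_div_iff_of_ne_zero (pow_ne_zero'' hcoeE0 m)]
    intro y hy
    rw [← FractionalIdeal.coeIdeal_pow] at hy
    obtain ⟨u, hu, rfl⟩ := (FractionalIdeal.mem_coeIdeal _).mp hy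
    have hus : u ∈ Ideal.span {s} := hs1 hu
    obtain ⟨r, hr⟩ := Ideal.mem_span_singleton'.mp hus
    refine (FractionalIdeal.mem_one_iff _).mpr ⟨r, ?_⟩
    rw [← hr, map_mul]
    field_simp
  have hvvHfm : vv (Hf ^ m) = vv (Hf ^ m) := rfl
  have hsinvHf : (φ s)⁻¹ ∈ vv (Hf ^ m) := by
    refine one_div_le_vv (W := ((E : FractionalIdeal A⁰ K)) ^ m) (pow_ne_zero'' hcoeE0 m) ?_
      hsinvE
    rw [← mul_pow, hMeq]
    exact vv_pow_eq_one hM0 hM1 hMvv m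
  have hHfm : Hf ^ m = FractionalIdeal.spanSingleton A⁰ ((φ (t ^ m))⁻¹) *
      ((I ^ m : Ideal A) : FractionalIdeal A⁰ K) := by
    rw [← hHfeq, mul_pow, FractionalIdeal.spanSingleton_pow, inv_pow, ← map_pow,
      ← FractionalIdeal.coeIdeal_pow]
  have hφtm0 : φ (t ^ m) ≠ 0 := fun h => pow_ne_zero m ht0 (IsFractionRing.to_map_eq_zero_iff.mp h)
  have hzfinal : (φ s)⁻¹ * φ (t ^ m) ∈ vv ((I ^ m : Ideal A) : FractionalIdeal A⁰ K) := by
    rw [hHfm, vv_smul (inv_ne_zero hφtm0)] at hsinvHf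
    have := (mem_singleton_mul' (inv_ne_zero hφtm0)).mp hsinvHf
    rwa [inv_inv, mul_comm] at this
  -- hsub for lemmaT
  have hpow : ∀ (k : ℕ), ∀ i ∈ I ^ k, φ i * ((φ t) ^ k)⁻¹ ∈ B := by
    intro k
    induction k with
    | zero =>
      intro i _
      rw [pow_zero, inv_one, mul_one]
      exact B.algebraMap_mem i
    | succ k ih =>
      intro i hi
      rw [pow_succ] at hi
      refine Submodule.mul_induction_on hi (fun p hp q hq => ?_) (fun p q ihp ihq => ?_)
      ·
        have h1 : φ p * ((φ t) ^ k)⁻¹ ∈ B := ih p hp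
        have h2 : φ q * (φ t)⁻¹ ∈ B := by
          obtain ⟨c₁, c₂, hc⟩ := Ideal.mem_span_pair.mp (by rwa [hIdef] at hq)
          rw [← hc, map_add, map_mul, map_mul, add_mul, mul_assoc (φ c₁) (φ a) ((φ t)⁻¹)]
          refine B.add_mem (B.mul_mem (B.algebraMap_mem c₁) ?_) ?_
          · rw [show φ a * (φ t)⁻¹ = φ a / φ t from by ring, heq]
            exact hx
          · rw [show φ c₂ * φ t * (φ t)⁻¹ = φ c₂ * (φ t * (φ t)⁻¹) from by ring,
              mul_inv_cancel₀ hφt0, mul_one]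
            exact B.algebraMap_mem c₂
        have := B.mul_mem h1 h2
        rwa [show φ p * (φ t ^ k)⁻¹ * (φ q * (φ t)⁻¹) =
          φ p * φ q * ((φ t ^ k)⁻¹ * (φ t)⁻¹) from by ring, ← map_mul, ← mul_inv,
          ← pow_succ] at this
      · rw [map_add, add_mul]
        exact B.add_mem ihp ihq
  have hsub : ∀ i ∈ I ^ m, φ i * (φ (t ^ m))⁻¹ ∈ B := by
    intro i hi
    rw [map_pow]
    exact hpow m i hi
  have hImfg : (I ^ m).FG := Submodule.FG.pow hIfg m
  have hIm0 : I ^ m ≠ ⊥ := by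
    intro h
    have h2 := pow_ne_zero'' (X := (I : FractionalIdeal A⁰ K))
      (by rwa [ne_eq, FractionalIdeal.coeIdeal_eq_zero]) m
    rw [← FractionalIdeal.coeIdeal_pow, h, FractionalIdeal.coeIdeal_bot] at h2
    exact h2 rfl
  have hsinvB : (φ s)⁻¹ ∈ B :=
    lemmaT hA hGD hIm0 hImfg (pow_ne_zero m ht0) hsub hzfinal
  exact ⟨s, a', hsinvB, hφs0, ha'.symm⟩
end MainSurj

/-- a PVMD with `Iⁿ ⊆ bA ⊆ I_v` for every f.g. nonzero ideal is
globally perinormal. -/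
theorem pvmd_power_principal_globally_perinormal (A : Type*) [CommRing A] [IsDomain A]
    (hA : IsPVMD A)
    (hcond : ∀ I : Ideal A, I ≠ ⊥ → I.FG → ∃ n : ℕ, 1 ≤ n ∧ ∃ b : A,
      I ^ n ≤ Ideal.span {b} ∧
      ((Ideal.span {b} : Ideal A) : FractionalIdeal A⁰ (FractionRing A)) ≤
        1 / (1 / (I : FractionalIdeal A⁰ (FractionRing A)))) :
    GloballyPerinormal A := by
  intro B hGD
  classical
  refine ⟨Submonoid.comap (algebraMap A B) (IsUnit.submonoid B), ?_, ?_, ?_⟩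
  · rintro ⟨y, hy⟩
    exact (IsUnit.mem_submonoid_iff _).mp hy
  · intro z
    by_cases hz0 : z = 0
    · refine ⟨(0, ⟨1, ?_⟩), ?_⟩
      · show algebraMap A B 1 ∈ IsUnit.submonoid B
        exact (IsUnit.mem_submonoid_iff _).mpr (by rw [map_one]; exact isUnit_one)
      · rw [hz0, map_zero, zero_mul]
    · have hx : (z : FractionRing A) ∈ B := z.2
      have hx0 : (z : FractionRing A) ≠ 0 := fun h => hz0 (Subtype.ext h)
      obtain ⟨s, a', hsinv, hφs0, heq⟩ := main_surj hA hcond hGD hx hx0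
      have hsS : algebraMap A B s ∈ IsUnit.submonoid B := by
        refine (IsUnit.mem_submonoid_iff _).mpr (isUnit_iff_exists_inv.mpr
          ⟨⟨(algebraMap A (FractionRing A) s)⁻¹, hsinv⟩, ?_⟩)
        apply Subtype.ext
        show algebraMap A (FractionRing A) s * (algebraMap A (FractionRing A) s)⁻¹ = 1
        exact mul_inv_cancel₀ hφs0
      refine ⟨(a', ⟨s, hsS⟩), ?_⟩
      apply Subtype.ext
      show (z : FractionRing A) * algebraMap A (FractionRing A) s =
        algebraMap A (FractionRing A) a'
      rw [mul_comm]
      exact heq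
  · intro x y h
    refine ⟨1, ?_⟩
    have h2 : algebraMap A (FractionRing A) x = algebraMap A (FractionRing A) y :=
      congrArg Subtype.val h
    rw [IsFractionRing.injective A (FractionRing A) h2]
end
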